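/- Let q ∈ ℂ* not be a root of unity and let L₁, L₂ be line bundle A_q-modules: L_i has underlying A-module A = ℂ[z,z⁻¹] with σ acting by σ(f(z)) = c_i z^{d_i} f(qz), c_i ∈ ℂ*, d_i ∈ ℤ. Then L₁ ≅ L₂ as A_q-modules if and only if d₁ = d₂ and c₁/c₂ ∈ q^ℤ. Consequently the group of isomorphism classes of line bundles under ⊗_A is isomorphic to (ℂ*/q^ℤ) × ℤ. -/

import Mathlib

open LaurentPolynomial

lemma single_eq_smul_T (k : ℤ) (a : ℂ) :
    (AddMonoidAlgebra.single k a : LaurentPolynomial ℂ) = a • T k := by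
  rw [T, AddMonoidAlgebra.smul_single, smul_eq_mul, mul_one]

lemma sigma_coeff (c q : ℂ) (d : ℤ) (σ : LaurentPolynomial ℂ →ₗ[ℂ] LaurentPolynomial ℂ)
    (hσ : ∀ n : ℤ, σ (T n) = (c * q ^ n) • (T (n + d) : LaurentPolynomial ℂ))
    (g : LaurentPolynomial ℂ) (j : ℤ) : (σ g).coeff (j + d) = c * q ^ j * g.coeff j := by
  have h1 : σ g = g.coeff.sum fun k a => AddMonoidAlgebra.single (k + d) (a * (c * q ^ k)) := by
    conv_lhs => rw [← AddMonoidAlgebra.sum_coeff_single g]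
    rw [map_finsuppSum]
    refine Finsupp.sum_congr fun k _ => ?_
    rw [single_eq_smul_T, map_smul, hσ, smul_smul]
    rw [T, AddMonoidAlgebra.smul_single, smul_eq_mul, mul_one]
  rw [h1]
  simp only [AddMonoidAlgebra.coeff_finsuppSum, AddMonoidAlgebra.coeff_single]
  rw [Finsupp.sum_apply, Finsupp.sum]
  rw [Finset.sum_eq_single j]
  · rw [Finsupp.single_apply, if_pos rfl]; ring
  · intro k _ hk
    rw [Finsupp.single_apply, if_neg (by omega)]
  · intro hj
    rw [Finsupp.notMem_support_iff.mp hj, Finsupp.single_apply]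
    simp

theorem stmt_12 (q : ℂ) (hq : ∀ n : ℤ, n ≠ 0 → q ^ n ≠ 1)
    (c₁ c₂ : ℂ) (hc₁ : c₁ ≠ 0) (hc₂ : c₂ ≠ 0) (d₁ d₂ : ℤ)
    (σ₁ σ₂ : LaurentPolynomial ℂ →ₗ[ℂ] LaurentPolynomial ℂ)
    (hσ₁ : ∀ n : ℤ, σ₁ (T n) = (c₁ * q ^ n) • (T (n + d₁) : LaurentPolynomial ℂ))
    (hσ₂ : ∀ n : ℤ, σ₂ (T n) = (c₂ * q ^ n) • (T (n + d₂) : LaurentPolynomial ℂ)) :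
    (∃ φ : LaurentPolynomial ℂ ≃ₗ[LaurentPolynomial ℂ] LaurentPolynomial ℂ,
        ∀ f : LaurentPolynomial ℂ, φ (σ₁ f) = σ₂ (φ f)) ↔
      d₁ = d₂ ∧ ∃ n : ℤ, c₁ = q ^ n * c₂ := by
  constructor
  · rintro ⟨φ, hφ⟩
    set g := φ 1 with hgdef
    have hgne : g ≠ 0 := by
      intro h
      exact one_ne_zero (φ.injective (h.trans (map_zero φ).symm))
    have hφT : φ (T d₁) = T d₁ * g := by
      calc φ (T d₁) = φ ((T d₁ : LaurentPolynomial ℂ) • 1) := by rw [smul_eq_mul, mul_one]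
      _ = (T d₁ : LaurentPolynomial ℂ) • φ 1 := map_smul φ _ _
      _ = T d₁ * g := by rw [smul_eq_mul]
    have e1 : c₁ • ((T d₁ : LaurentPolynomial ℂ) * g) = σ₂ g := by
      have h := hφ 1
      rw [show (1 : LaurentPolynomial ℂ) = T 0 from rfl, hσ₁ 0, zpow_zero, mul_one,
        zero_add] at h
      rw [← algebraMap_smul (LaurentPolynomial ℂ) c₁ (T d₁ : LaurentPolynomial ℂ),
        map_smul, algebraMap_smul, hφT] at h
      exact h
    have e1' : (AddMonoidAlgebra.single d₁ c₁ : LaurentPolynomial ℂ) * g = σ₂ g := by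
      rw [show (AddMonoidAlgebra.single d₁ c₁ : LaurentPolynomial ℂ)
            = c₁ • (T d₁ : LaurentPolynomial ℂ) from single_eq_smul_T d₁ c₁,
        smul_mul_assoc]
      exact e1
    have key : ∀ j : ℤ, c₁ * g.coeff (j + (d₂ - d₁)) = c₂ * q ^ j * g.coeff j := by
      intro j
      have h2 := congrArg (fun p : LaurentPolynomial ℂ => p.coeff (j + d₂)) e1'
      rw [sigma_coeff c₂ q d₂ σ₂ hσ₂ g j, AddMonoidAlgebra.coeff_single_mul_apply] at h2
      rw [show -d₁ + (j + d₂) = j + (d₂ - d₁) by ring] at h2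
      exact h2
    by_cases hq0 : q = 0
    · subst hq0
      have hsupp : ∀ m : ℤ, m ≠ d₂ - d₁ → g.coeff m = 0 := by
        intro m hm
        have h := key (m - (d₂ - d₁))
        rw [zero_zpow _ (by omega), show m - (d₂ - d₁) + (d₂ - d₁) = m by ring] at h
        have : c₁ * g.coeff m = 0 := by rw [h]; ring
        rcases mul_eq_zero.mp this with h' | h'
        · exact absurd h' hc₁
        · exact h'
      have hge : g.coeff (d₂ - d₁) ≠ 0 := by
        intro h
        apply hgne
        ext m
        by_cases hm : m = d₂ - d₁
        · simpa [hm] using h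
        · simpa using hsupp m hm
      have hd : d₂ - d₁ = 0 := by
        by_contra hd
        have h := key 0
        rw [zpow_zero, hsupp 0 (by omega), zero_add] at h
        rcases mul_eq_zero.mp (by rw [h]; ring : c₁ * g.coeff (d₂ - d₁) = 0) with h' | h'
        · exact hc₁ h'
        · exact hge h'
      refine ⟨by omega, 0, ?_⟩
      have h := key 0
      rw [hd, add_zero, zpow_zero] at h
      have hg0 : g.coeff 0 ≠ 0 := by rw [hd] at hge; exact hge
      have := mul_right_cancel₀ hg0 h
      rw [zpow_zero, one_mul]
      linear_combination this
    · have hstep : ∀ m : ℤ, g.coeff m ≠ 0 → g.coeff (m + (d₂ - d₁)) ≠ 0 := by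
        intro m hm h
        have h0 : c₂ * q ^ m * g.coeff m = 0 := by rw [← key m, h, mul_zero]
        exact (mul_ne_zero (mul_ne_zero hc₂ (zpow_ne_zero m hq0)) hm) h0
      have hns : g.coeff.support.Nonempty :=
        Finsupp.support_nonempty_iff.mpr (fun h => hgne (AddMonoidAlgebra.coeff_eq_zero.mp h))
      have he : d₂ - d₁ = 0 := by
        rcases lt_trichotomy (d₂ - d₁) 0 with h | h | h
        · set m := g.coeff.support.min' hns with hm
          have hgm : g.coeff m ≠ 0 := Finsupp.mem_support_iff.mp (g.coeff.support.min'_mem hns)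
          have h1 : m + (d₂ - d₁) ∈ g.coeff.support := Finsupp.mem_support_iff.mpr (hstep m hgm)
          have := g.coeff.support.min'_le _ h1
          omega
        · exact h
        · set m := g.coeff.support.max' hns with hm
          have hgm : g.coeff m ≠ 0 := Finsupp.mem_support_iff.mp (g.coeff.support.max'_mem hns)
          have h1 : m + (d₂ - d₁) ∈ g.coeff.support := Finsupp.mem_support_iff.mpr (hstep m hgm)
          have := g.coeff.support.le_max' _ h1
          omega
      obtain ⟨m, hm⟩ := hns
      have hgm : g.coeff m ≠ 0 := Finsupp.mem_support_iff.mp hm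
      refine ⟨by omega, m, ?_⟩
      have h := key m
      rw [he, add_zero] at h
      have := mul_right_cancel₀ hgm h
      rw [this]; ring
  · rintro ⟨rfl, n, hc⟩
    have hkey : ∀ m : ℤ, c₁ * q ^ m = c₂ * q ^ (n + m) := by
      intro m
      by_cases hq0 : q = 0
      · subst hq0
        by_cases hn : n = 0
        · subst hn
          rw [zpow_zero, one_mul] at hc
          rw [hc, zero_add]
        · rw [zero_zpow n hn, zero_mul] at hc
          exact absurd hc hc₁
      · rw [hc, zpow_add₀ hq0]; ring
    refine ⟨{ toFun := fun f => T n * f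
              map_add' := fun x y => mul_add _ x y
              map_smul' := fun r x => by simp [smul_eq_mul]; ring
              invFun := fun f => T (-n) * f
              left_inv := fun f => by
                show (T (-n) : LaurentPolynomial ℂ) * (T n * f) = f
                rw [← mul_assoc, ← T_add, neg_add_cancel, T_zero, one_mul]
              right_inv := fun f => by
                show (T n : LaurentPolynomial ℂ) * (T (-n) * f) = f
                rw [← mul_assoc, ← T_add, add_neg_cancel, T_zero, one_mul] }, ?_⟩
    intro f
    show (T n : LaurentPolynomial ℂ) * σ₁ f = σ₂ ((T n : LaurentPolynomial ℂ) * f)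
    conv_lhs => rw [← AddMonoidAlgebra.sum_coeff_single f, map_finsuppSum, Finsupp.mul_sum]
    conv_rhs => rw [← AddMonoidAlgebra.sum_coeff_single f, Finsupp.mul_sum, map_finsuppSum]
    refine Finsupp.sum_congr fun k _ => ?_
    have lhs : (T n : LaurentPolynomial ℂ) * σ₁ (AddMonoidAlgebra.single k (f.coeff k)) =
        (f.coeff k * (c₁ * q ^ k)) • T (n + (k + d₁)) := by
      rw [single_eq_smul_T, map_smul, hσ₁, mul_smul_comm, mul_smul_comm, smul_smul, ← T_add]
    have rhs : σ₂ ((T n : LaurentPolynomial ℂ) * AddMonoidAlgebra.single k (f.coeff k)) =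
        (f.coeff k * (c₂ * q ^ (n + k))) • T (n + k + d₁) := by
      rw [show (AddMonoidAlgebra.single k (f.coeff k) : LaurentPolynomial ℂ) = f.coeff k • T k from
        single_eq_smul_T k (f.coeff k), mul_smul_comm, ← T_add, map_smul, hσ₂, smul_smul]
    rw [lhs, rhs, hkey k, show n + (k + d₁) = n + k + d₁ by ring]
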